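/- Let d ≥ 1 and let v : (Fin n → ℝ) → ℝ be d-strong-SOS, nonnegative on nonnegative vectors, and weakly increasing in each coordinate. Then for every coordinate i and all reals a, σ with 0 ≤ a ≤ σ ≤ 2a, v( σ·e_i ) ≤ (d+1) · v( a·e_i ), where x·e_i denotes the vector with value x at coordinate i and 0 elsewhere. -/
import Mathlib


/-- `v` is a `d`-approximate strongly-submodular-over-signals
(`d`-strong-SOS) valuation: for every coordinate `j`, every `δ ≥ 0`, and all
vectors `0 ≤ t' ≤ t` coordinatewise,
`d·(v(t' + δ·e_j) − v(t')) ≥ v(t + δ·e_j) − v(t)`. -/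
def dStrongSOS {n : ℕ} (d : ℝ) (v : (Fin n → ℝ) → ℝ) : Prop :=
  ∀ (j : Fin n) (δ : ℝ), 0 ≤ δ →
    ∀ t t' : Fin n → ℝ, (∀ l, 0 ≤ t' l) → (∀ l, t' l ≤ t l) →
      d * (v (Function.update t' j (t' j + δ)) - v t') ≥
        v (Function.update t j (t j + δ)) - v t

/-- The doubling inequality (Equations (6) and (9) of the paper) behind the
Random Bucket analysis: for a nonnegative, monotone, `d`-strong-SOS valuation
`v`, any coordinate `i` and reals `0 ≤ a ≤ σ ≤ 2a`, one has
`v(σ·e_i) ≤ (d+1)·v(a·e_i)`. -/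
theorem strong_sos_doubling {n : ℕ} (d : ℝ) (hd : 1 ≤ d)
    (v : (Fin n → ℝ) → ℝ) (hv : dStrongSOS d v)
    (hpos : ∀ t : Fin n → ℝ, (∀ l, 0 ≤ t l) → 0 ≤ v t)
    (hmono : ∀ t t' : Fin n → ℝ, (∀ l, t l ≤ t' l) → v t ≤ v t')
    (i : Fin n) (a c : ℝ) (ha : 0 ≤ a) (hac : a ≤ c) (hc : c ≤ 2 * a) :
    v (fun l => if l = i then c else 0)
      ≤ (d + 1) * v (fun l => if l = i then a else 0) := by
  set ea : Fin n → ℝ := fun l => if l = i then a else 0 with hea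
  have h0 : ∀ l, (0:ℝ) ≤ (0 : Fin n → ℝ) l := fun l => le_rfl
  have hle : ∀ l, (0 : Fin n → ℝ) l ≤ ea l := by
    intro l; simp only [hea, Pi.zero_apply]; split <;> simp [ha]
  have key := hv i a ha ea 0 h0 hle
  have hup1 : Function.update (0 : Fin n → ℝ) i ((0:Fin n → ℝ) i + a) = ea := by
    funext l
    by_cases h : l = i <;> simp [Function.update, h, hea]
  have hup2 : Function.update ea i (ea i + a) = fun l => if l = i then 2*a else 0 := by
    funext l
    by_cases h : l = i <;> simp [Function.update, h, hea]; ring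
  rw [hup1, hup2] at key
  have hv0 : 0 ≤ v 0 := hpos 0 (fun l => le_rfl)
  have hmono1 : v (fun l => if l = i then c else 0) ≤ v (fun l => if l = i then 2*a else 0) := by
    apply hmono; intro l; by_cases h : l = i <;> simp [h, hc]
  have hd0 : (0:ℝ) ≤ d := le_trans zero_le_one hd
  nlinarith [key, hv0, hmono1]
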